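/- For integers a > b ≥ 2, the strict inequality (a!)^b · b! > (b!)^a · a! holds. -/

import Mathlib

lemma factA : ∀ b : ℕ, 2 ≤ b → Nat.factorial b < (b + 1) ^ (b - 1) := by
  intro b hb
  induction b with
  | zero => omega
  | succ n ih =>
    rcases Nat.lt_or_ge n 2 with h | h
    · interval_cases n
      · omega
      · decide
    · have hn := ih h
      have h1 : Nat.factorial (n + 1) = (n + 1) * Nat.factorial n := rfl
      have h2 : n + 1 - 1 = n := by omega
      rw [h1, h2]
      calc (n + 1) * Nat.factorial n < (n + 1) * (n + 1) ^ (n - 1) := by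
            exact Nat.mul_lt_mul_of_le_of_lt (le_refl _) hn (by omega)
        _ = (n + 1) ^ (n - 1 + 1) := by ring
        _ = (n + 1) ^ n := by rw [show n - 1 + 1 = n by omega]
        _ ≤ (n + 2) ^ n := Nat.pow_le_pow_left (by omega) n
  
lemma key (b : ℕ) (hb : 2 ≤ b) : ∀ a, b < a →
    Nat.factorial b ^ (a - 1) < Nat.factorial a ^ (b - 1) := by
  intro a ha
  induction a with
  | zero => omega
  | succ n ih =>
    rcases Nat.lt_or_ge b n with h | h
    · have hn := ih h
      have h2 : n + 1 - 1 = n := by omega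
      rw [h2]
      have hstep : Nat.factorial b < (n + 1) ^ (b - 1) := by
        calc Nat.factorial b < (b + 1) ^ (b - 1) := factA b hb
          _ ≤ (n + 1) ^ (b - 1) := Nat.pow_le_pow_left (by omega) _
      calc Nat.factorial b ^ n = Nat.factorial b ^ (n - 1) * Nat.factorial b := by
            rw [← pow_succ, show n - 1 + 1 = n by omega]
        _ < Nat.factorial n ^ (b - 1) * (n + 1) ^ (b - 1) :=
            Nat.mul_lt_mul'' hn hstep
        _ = (Nat.factorial n * (n + 1)) ^ (b - 1) := by rw [mul_pow]
        _ = Nat.factorial (n + 1) ^ (b - 1) := by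
            rw [Nat.factorial_succ]; ring_nf
    · -- b = n (base case a = b + 1)
      have hbn : b = n := by omega
      subst hbn
      have h2 : b + 1 - 1 = b := by omega
      rw [h2]
      have hstep : Nat.factorial b < (b + 1) ^ (b - 1) := factA b hb
      calc Nat.factorial b ^ b = Nat.factorial b ^ (b - 1) * Nat.factorial b := by
            rw [← pow_succ, show b - 1 + 1 = b by omega]
        _ < Nat.factorial b ^ (b - 1) * (b + 1) ^ (b - 1) := by
            exact Nat.mul_lt_mul_of_le_of_lt (le_refl _) hstep
              (Nat.pow_pos (Nat.factorial_pos b))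
        _ = (Nat.factorial b * (b + 1)) ^ (b - 1) := by rw [mul_pow]
        _ = Nat.factorial (b + 1) ^ (b - 1) := by
            rw [Nat.factorial_succ]; ring_nf

theorem stmt_1 (a b : ℕ) (hb : 2 ≤ b) (hab : b < a) :
    (Nat.factorial b) ^ a * Nat.factorial a < (Nat.factorial a) ^ b * Nat.factorial b := by
  have hkey := key b hb a hab
  have ha : Nat.factorial b ^ a = Nat.factorial b ^ (a - 1) * Nat.factorial b := by
    rw [← pow_succ, show a - 1 + 1 = a by omega]
  have hb' : Nat.factorial a ^ b = Nat.factorial a ^ (b - 1) * Nat.factorial a := by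
    rw [← pow_succ, show b - 1 + 1 = b by omega]
  rw [ha, hb']
  have hpos : 0 < Nat.factorial b * Nat.factorial a :=
    Nat.mul_pos (Nat.factorial_pos b) (Nat.factorial_pos a)
  calc Nat.factorial b ^ (a - 1) * Nat.factorial b * Nat.factorial a
      = Nat.factorial b ^ (a - 1) * (Nat.factorial b * Nat.factorial a) := by ring
    _ < Nat.factorial a ^ (b - 1) * (Nat.factorial b * Nat.factorial a) :=
        Nat.mul_lt_mul_of_lt_of_le hkey (le_refl _) hpos
    _ = Nat.factorial a ^ (b - 1) * Nat.factorial a * Nat.factorial b := by ring
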